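/- Let B ⊆ [0,1]^d be a lower set (u ∈ B and v ≤ u componentwise implies v ∈ B), let δ > 0, and let U_δ(∂⁺B) be the closed δ-neighbourhood (in Euclidean distance, intersected with [0,1]^d) of the upper boundary ∂⁺B = {x ∈ cl(B) : ∀ε>0, x + ε(1,…,1) ∉ cl(B)}. Then the Lebesgue measure of U_δ(∂⁺B) is at most 2dδ. -/

import Mathlib

open Set MeasureTheory
open scoped ENNReal

/-- The "upper" boundary of a set `B ⊆ [0,1]^d`:
`{x ∈ cl(B) : ∀ ε > 0, x + ε(1,…,1) ∉ cl(B)}`. -/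
def upperBoundary {d : ℕ} (B : Set (Fin d → ℝ)) : Set (Fin d → ℝ) :=
  {x ∈ closure B | ∀ ε : ℝ, 0 < ε → x + ε • (1 : Fin d → ℝ) ∉ closure B}

/-- Closed δ-neighbourhood in Euclidean distance of `S`, intersected with `[0,1]^d`. -/
def eNbhd {d : ℕ} (S : Set (Fin d → ℝ)) (δ : ℝ) : Set (Fin d → ℝ) :=
  {u ∈ Set.Icc (0 : Fin d → ℝ) 1 |
    ∃ v ∈ S, Real.sqrt (∑ i, (u i - v i) ^ 2) ≤ δ}

/-- For a lower set `B ⊆ [0,1]^d`, the Lebesgue measure of the closed δ-neighbourhood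
of its upper boundary is at most `2dδ`. -/
theorem stmt4 (d : ℕ) (B : Set (Fin d → ℝ)) (hBsub : B ⊆ Set.Icc 0 1)
    (hlow : ∀ u ∈ B, ∀ v ∈ Set.Icc (0 : Fin d → ℝ) 1, v ≤ u → v ∈ B)
    (δ : ℝ) (hδ : 0 < δ) :
    volume (eNbhd (upperBoundary B) δ) ≤ ENNReal.ofReal (2 * d * δ) := by
  classical
  by_cases hd0 : d = 0
  · subst hd0
    have hub : upperBoundary B = (∅ : Set (Fin 0 → ℝ)) := by
      ext x
      simp only [upperBoundary, Set.mem_setOf_eq, Set.mem_empty_iff_false, iff_false, not_and]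
      intro hx h
      have hx1 : x + (1:ℝ) • (1 : Fin 0 → ℝ) = x := funext fun i => i.elim0
      exact (h 1 one_pos) (by rw [hx1]; exact hx)
    have he : eNbhd (upperBoundary B) δ = ∅ := by
      rw [eNbhd, hub]; ext u; simp
    rw [he, measure_empty]
    exact zero_le
  have hcube : volume (Set.Icc (0:Fin d → ℝ) 1) = 1 := by
    rw [Real.volume_Icc_pi]
    simp
  by_cases hδ2 : 1 ≤ 2 * δ
  · -- trivial case: 2dδ ≥ 1 ≥ volume of the cube
    have h1 : eNbhd (upperBoundary B) δ ⊆ Set.Icc 0 1 := fun u hu => hu.1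
    calc volume (eNbhd (upperBoundary B) δ) ≤ volume (Set.Icc (0:Fin d → ℝ) 1) :=
          measure_mono h1
      _ = 1 := hcube
      _ ≤ ENNReal.ofReal (2 * d * δ) := by
          refine ENNReal.one_le_ofReal.mpr ?_
          have hd1 : (1:ℝ) ≤ d := by exact_mod_cast Nat.one_le_iff_ne_zero.mpr hd0
          nlinarith
  push_neg at hδ2
  -- main case : 2δ < 1
  set c : ℝ → (Fin d → ℝ) := fun t _ => t with hc
  have hclB : closure B ⊆ Set.Icc 0 1 := closure_minimal hBsub isClosed_Icc
  -- closure of B is a lower set (within the cube)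
  have hcl_lower : ∀ y ∈ Set.Icc (0:Fin d → ℝ) 1, ∀ x ∈ closure B, y ≤ x → y ∈ closure B := by
    intro y hy x hx hyx
    have hcont : Continuous fun z : Fin d → ℝ => y ⊓ z :=
      continuous_pi fun i => continuous_const.inf (continuous_apply i)
    have himg : (fun z : Fin d → ℝ => y ⊓ z) '' B ⊆ B := by
      rintro _ ⟨z, hz, rfl⟩
      exact hlow z hz _ ⟨le_inf hy.1 (hBsub hz).1, inf_le_left.trans hy.2⟩ inf_le_right
    have h1 : y ⊓ x ∈ closure ((fun z : Fin d → ℝ => y ⊓ z) '' B) :=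
      image_closure_subset_closure_image hcont ⟨x, hx, rfl⟩
    have h2 : y ⊓ x ∈ closure B := closure_mono himg h1
    rwa [inf_eq_left.mpr hyx] at h2
  -- the extension of closure B to a lower set on {x ≤ 1}
  set Abar : Set (Fin d → ℝ) := {x | x ≤ 1 ∧ x ⊔ 0 ∈ closure B} with hAbarDef
  have hAlow : ∀ x y : Fin d → ℝ, x ≤ y → y ∈ Abar → x ∈ Abar := by
    intro x y hxy hy
    have hx1 : x ≤ 1 := le_trans hxy hy.1
    refine ⟨hx1, ?_⟩
    exact hcl_lower _ ⟨le_sup_right, sup_le hx1 zero_le_one⟩ _ hy.2 (sup_le_sup_right hxy 0)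
  have hAclosed : IsClosed Abar := by
    have h1 : IsClosed {x : Fin d → ℝ | x ≤ 1} := by
      have he : {x : Fin d → ℝ | x ≤ 1} = ⋂ i, (fun x : Fin d → ℝ => x i) ⁻¹' Set.Iic 1 := by
        ext x
        simp [Pi.le_def]
      rw [he]
      exact isClosed_iInter fun i => isClosed_Iic.preimage (continuous_apply i)
    have h2 : Continuous fun x : Fin d → ℝ => x ⊔ 0 :=
      continuous_pi fun i => (continuous_apply i).sup continuous_const
    have he : Abar = {x : Fin d → ℝ | x ≤ 1} ∩ (fun x : Fin d → ℝ => x ⊔ 0) ⁻¹' closure B := rfl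
    rw [he]
    exact h1.inter (isClosed_closure.preimage h2)
  -- the set of points strictly more than δ diagonally below Abar
  set Pset : Set (Fin d → ℝ) := {u | ∃ t, δ < t ∧ u + c t ∈ Abar} with hPsetDef
  have hPsetEq : Pset = ⋃ (q : ℚ), ⋃ (_ : δ < (q:ℝ)), (fun u => u + c q) ⁻¹' Abar := by
    ext u
    simp only [hPsetDef, Set.mem_setOf_eq, Set.mem_iUnion, Set.mem_preimage]
    constructor
    · rintro ⟨t, ht, hmem⟩
      obtain ⟨q, hq1, hq2⟩ := exists_rat_btwn ht
      refine ⟨q, hq1, hAlow _ _ ?_ hmem⟩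
      intro i
      simp only [Pi.add_apply, hc]
      linarith
    · rintro ⟨q, hq, hmem⟩
      exact ⟨q, hq, hmem⟩
  have hPmeas : MeasurableSet Pset := by
    rw [hPsetEq]
    exact MeasurableSet.iUnion fun q => MeasurableSet.iUnion fun _ =>
      hAclosed.measurableSet.preimage (measurable_add_const _)
  -- the "boundary layer" G
  set G : Set (Fin d → ℝ) := (Set.Icc 0 1 ∩ {u | u - c δ ∈ Abar}) ∩ Psetᶜ with hGDef
  have hGmeas : MeasurableSet G := by
    refine (MeasurableSet.inter (measurableSet_Icc) ?_).inter hPmeas.compl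
    exact hAclosed.measurableSet.preimage (measurable_id.sub_const _)
  -- the neighbourhood of the upper boundary is contained in G
  have hWG : eNbhd (upperBoundary B) δ ⊆ G := by
    rintro u ⟨huIcc, v, hv, hdist⟩
    have hvcl : v ∈ closure B := hv.1
    have hvIcc : v ∈ Set.Icc (0:Fin d → ℝ) 1 := hclB hvcl
    have hsum : ∑ i, (u i - v i)^2 ≤ δ^2 := by
      have h0 : 0 ≤ ∑ i, (u i - v i)^2 := Finset.sum_nonneg fun i _ => sq_nonneg _
      nlinarith [Real.sq_sqrt h0, Real.sqrt_nonneg (∑ i, (u i - v i)^2)]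
    have habs : ∀ i, |u i - v i| ≤ δ := by
      intro i
      have h1 : (u i - v i)^2 ≤ δ^2 :=
        le_trans (Finset.single_le_sum (f := fun i => (u i - v i)^2)
          (fun j _ => sq_nonneg _) (Finset.mem_univ i)) hsum
      rw [abs_le]
      constructor <;> nlinarith
    refine ⟨⟨huIcc, ?_, ?_⟩, ?_⟩
    · -- u - c δ ≤ 1
      intro i
      have h1 : u i ≤ 1 := by simpa using huIcc.2 i
      simp only [Pi.sub_apply, Pi.one_apply, hc]
      linarith
    · -- (u - c δ) ⊔ 0 ∈ closure B
      refine hcl_lower _ ⟨le_sup_right, ?_⟩ v hvcl ?_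
      · refine sup_le ?_ zero_le_one
        intro i
        have h1 : u i ≤ 1 := by simpa using huIcc.2 i
        simp only [Pi.sub_apply, Pi.one_apply, hc]
        linarith
      · intro i
        have h1 := (abs_le.mp (habs i)).2
        have h2 : (0:ℝ) ≤ v i := by simpa using hvIcc.1 i
        simp only [Pi.sup_apply, Pi.sub_apply, Pi.zero_apply, hc]
        exact max_le (by linarith) (by simpa using h2)
    · -- u ∉ Pset
      rintro ⟨t, ht, hmem⟩
      have h1 : v + c (t - δ) ∈ Abar := by
        refine hAlow _ _ ?_ hmem
        intro i
        have h2 := (abs_le.mp (habs i)).1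
        simp only [Pi.add_apply, hc]
        linarith
      have h2 : v + (t - δ) • (1 : Fin d → ℝ) ∉ closure B := hv.2 (t - δ) (by linarith)
      apply h2
      have h3 : (v + c (t-δ)) ⊔ 0 = v + (t - δ) • (1 : Fin d → ℝ) := by
        funext i
        simp only [Pi.sup_apply, Pi.add_apply, Pi.zero_apply, Pi.smul_apply, Pi.one_apply,
          smul_eq_mul, mul_one, hc]
        have h5 : (0:ℝ) ≤ v i := by simpa using hvIcc.1 i
        exact max_eq_left (by linarith)
      rw [← h3]
      exact h1.2
  -- the diagonal "graph" set N is null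
  set N : Set (Fin d → ℝ) := {u | u + c δ ∈ Abar ∧ u ∉ Pset} with hNDef
  have hNmeas : MeasurableSet N :=
    (hAclosed.measurableSet.preimage (measurable_add_const _)).inter hPmeas.compl
  set M : Set (Fin d → ℝ) := N ∩ Set.Icc (-1) 1 with hMDef
  have hMmeas : MeasurableSet M := hNmeas.inter measurableSet_Icc
  have hMsub : M ⊆ Set.Icc (-1 : Fin d → ℝ) 1 := Set.inter_subset_right
  have hMnull : volume M = 0 := by
    by_contra hm
    have hCfin : volume (Set.Icc (-1:Fin d → ℝ) 2) ≠ ⊤ :=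
      (isCompact_Icc.measure_lt_top).ne
    have hMfin : volume M ≠ ⊤ := by
      have h1 : volume M ≤ volume (Set.Icc (-1:Fin d → ℝ) 1) := measure_mono hMsub
      exact (lt_of_le_of_lt h1 isCompact_Icc.measure_lt_top).ne
    have key : ∀ K : ℕ, (K : ℝ≥0∞) * volume M ≤ volume (Set.Icc (-1:Fin d → ℝ) 2) := by
      intro K
      rcases Nat.eq_zero_or_pos K with hK | hK
      · simp [hK]
      have hK' : (0:ℝ) < K := by exact_mod_cast hK
      set S : ℕ → Set (Fin d → ℝ) := fun j => (fun x => x + c (-(j / K : ℝ))) ⁻¹' M with hS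
      have hSm : ∀ j, MeasurableSet (S j) := fun j => hMmeas.preimage (measurable_add_const _)
      have hSvol : ∀ j, volume (S j) = volume M := fun j => measure_preimage_add_right volume _ M
      have hSsub : ∀ j ∈ Finset.range K, S j ⊆ Set.Icc (-1:Fin d → ℝ) 2 := by
        intro j hj x hx
        have h1 := hMsub hx
        have hjK0 : (0:ℝ) ≤ (j:ℝ)/K := by positivity
        have hjK1 : (j:ℝ)/K ≤ 1 := by
          rw [div_le_one hK']
          exact_mod_cast (Finset.mem_range.mp hj).le
        constructor
        · intro i
          have h2 := h1.1 i
          simp only [Pi.add_apply, Pi.neg_apply, Pi.one_apply, hc] at h2 ⊢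
          linarith
        · intro i
          have h2 := h1.2 i
          simp only [Pi.add_apply, Pi.one_apply, hc] at h2 ⊢
          have : (2:ℝ) = (2 : Fin d → ℝ) i := rfl
          rw [← this]
          linarith
      have hdisjlt : ∀ a b : ℕ, a < b → Disjoint (S a) (S b) := by
        intro a b hab
        rw [Set.disjoint_left]
        intro x hxa hxb
        have hpa : x + c (-(a / K : ℝ)) ∈ N := hxa.1
        have hpb : x + c (-(b / K : ℝ)) ∈ N := hxb.1
        have habK : (a:ℝ)/K < (b:ℝ)/K := by
          apply div_lt_div_of_pos_right ?_ hK'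
          exact_mod_cast hab
        refine hpb.2 ⟨δ + ((b:ℝ)/K - (a:ℝ)/K), by linarith, ?_⟩
        have heq : x + c (-(b / K : ℝ)) + c (δ + ((b:ℝ)/K - (a:ℝ)/K))
            = x + c (-(a / K : ℝ)) + c δ := by
          funext i
          simp only [Pi.add_apply, hc]
          ring
        rw [heq]
        exact hpa.1
      have hdisj : (↑(Finset.range K) : Set ℕ).PairwiseDisjoint S := by
        intro a _ b _ hab
        rcases lt_or_gt_of_ne hab with h | h
        · exact hdisjlt a b h
        · exact (hdisjlt b a h).symm
      have hunion : volume (⋃ j ∈ Finset.range K, S j) = ∑ j ∈ Finset.range K, volume (S j) :=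
        measure_biUnion_finset hdisj fun j _ => hSm j
      have hsum : ∑ j ∈ Finset.range K, volume (S j) = (K : ℝ≥0∞) * volume M := by
        simp [hSvol, Finset.sum_const]
      calc (K : ℝ≥0∞) * volume M = volume (⋃ j ∈ Finset.range K, S j) := by
            rw [hunion, hsum]
        _ ≤ volume (Set.Icc (-1:Fin d → ℝ) 2) := by
            refine measure_mono ?_
            exact Set.iUnion₂_subset hSsub
    obtain ⟨K, hKgt⟩ := ENNReal.exists_nat_gt
      (show volume (Set.Icc (-1:Fin d → ℝ) 2) / volume M ≠ ⊤ from
        (ENNReal.div_lt_top hCfin hm).ne)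
    rw [ENNReal.div_lt_iff (Or.inl hm) (Or.inl hMfin)] at hKgt
    exact absurd (key K) (not_le.mpr hKgt)
    -- translation bookkeeping
  set τ : Fin d → ℝ := c (2*δ) with hτ
  set Q : Set (Fin d → ℝ) := Set.Icc 0 (c (1 - 2*δ)) with hQ
  have hQmeas : MeasurableSet Q := measurableSet_Icc
  set Q1 : Set (Fin d → ℝ) := Q ∩ Pset with hQ1
  set Q2 : Set (Fin d → ℝ) := Q \ Pset with hQ2
  have hQ1meas : MeasurableSet Q1 := hQmeas.inter hPmeas
  have hQ2meas : MeasurableSet Q2 := hQmeas.diff hPmeas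
  set T : Set (Fin d → ℝ) := (fun x => x + (-τ)) ⁻¹' Q2 with hT
  have hTmeas : MeasurableSet T := hQ2meas.preimage (measurable_add_const _)
  have hTvol : volume T = volume Q2 := measure_preimage_add_right volume _ _
  have hQsub : Q ⊆ Set.Icc (0:Fin d → ℝ) 1 := by
    refine Set.Icc_subset_Icc le_rfl ?_
    intro i
    simp only [hc, Pi.one_apply]
    linarith
  -- T ∩ G is contained in a translate of M, hence null
  have hTG : T ∩ G ⊆ (fun x => x + (-τ)) ⁻¹' M := by
    rintro x ⟨hxT, hxG⟩
    have h1 : x + (-τ) ∈ Q2 := hxT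
    refine ⟨⟨?_, h1.2⟩, ?_⟩
    · have heq : (x + (-τ)) + c δ = x - c δ := by
        funext i
        simp only [Pi.add_apply, Pi.neg_apply, Pi.sub_apply, hτ, hc]
        ring
      rw [heq]
      exact hxG.1.2
    · have h2 : x + (-τ) ∈ Set.Icc (0:Fin d → ℝ) 1 := hQsub h1.1
      exact Set.Icc_subset_Icc (by intro i; simp only [Pi.neg_apply, Pi.one_apply]; norm_num)
        le_rfl h2
  have hTGnull : volume (T ∩ G) = 0 := by
    have h1 : volume (T ∩ G) ≤ volume ((fun x => x + (-τ)) ⁻¹' M) := measure_mono hTG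
    rw [measure_preimage_add_right volume _ M, hMnull] at h1
    exact le_antisymm h1 zero_le
  -- disjointness
  have hGQ1 : Disjoint G Q1 := by
    rw [Set.disjoint_left]
    rintro x ⟨_, hnp⟩ ⟨_, hp⟩
    exact hnp hp
  have hQ1T : Disjoint Q1 T := by
    rw [Set.disjoint_left]
    rintro x ⟨_, hp⟩ hxT
    obtain ⟨t, ht, hmem⟩ := hp
    refine hxT.2 ⟨t + 2*δ, by linarith, ?_⟩
    have heq : x + (-τ) + c (t + 2*δ) = x + c t := by
      funext i
      simp only [Pi.add_apply, Pi.neg_apply, hτ, hc]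
      ring
    rw [heq]
    exact hmem
  set T' : Set (Fin d → ℝ) := T \ G with hT'
  have hT'meas : MeasurableSet T' := hTmeas.diff hGmeas
  have hT'vol : volume T' = volume Q2 := by
    rw [← hTvol]
    refine le_antisymm (measure_mono Set.diff_subset) ?_
    calc volume T = volume ((T \ G) ∪ (T ∩ G)) := by rw [Set.diff_union_inter]
      _ ≤ volume (T \ G) + volume (T ∩ G) := measure_union_le _ _
      _ = volume T' := by rw [hTGnull, add_zero]
  -- subsets of the cube
  have hGsub : G ⊆ Set.Icc (0:Fin d → ℝ) 1 := fun x hx => hx.1.1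
  have hQ1sub : Q1 ⊆ Set.Icc (0:Fin d → ℝ) 1 := (Set.inter_subset_left).trans hQsub
  have hT'sub : T' ⊆ Set.Icc (0:Fin d → ℝ) 1 := by
    rintro x ⟨hxT, _⟩
    have h1 : x + (-τ) ∈ Q := (hxT : x + (-τ) ∈ Q2).1
    constructor
    · intro i
      have h2 := h1.1 i
      simp only [Pi.add_apply, Pi.neg_apply, Pi.zero_apply, hτ, hc] at h2 ⊢
      linarith
    · intro i
      have h2 := h1.2 i
      simp only [Pi.add_apply, Pi.neg_apply, Pi.one_apply, hτ, hc] at h2 ⊢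
      linarith
  -- additivity
  have hdisj2 : Disjoint (G ∪ Q1) T' := by
    rw [Set.disjoint_union_left]
    constructor
    · exact disjoint_sdiff_self_right
    · exact hQ1T.mono_right Set.diff_subset
  have hvol_union : volume (G ∪ Q1 ∪ T') = volume G + volume Q1 + volume T' := by
    rw [measure_union hdisj2 hT'meas, measure_union hGQ1 hQ1meas]
  have hQsplit : volume Q1 + volume Q2 = volume Q := measure_inter_add_diff Q hPmeas
  have hmain : volume G + volume Q ≤ 1 := by
    have h1 : volume G + volume Q1 + volume T' ≤ 1 := by
      rw [← hvol_union, ← hcube]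
      exact measure_mono (Set.union_subset (Set.union_subset hGsub hQ1sub) hT'sub)
    calc volume G + volume Q = volume G + (volume Q1 + volume Q2) := by rw [hQsplit]
      _ = volume G + volume Q1 + volume T' := by rw [hT'vol]; ring
      _ ≤ 1 := h1
  -- compute volume Q and conclude
  have hQvol : volume Q = ENNReal.ofReal ((1 - 2*δ)^d) := by
    rw [hQ, Real.volume_Icc_pi]
    have h1 : ∀ i : Fin d, (c (1 - 2*δ)) i - (0 : Fin d → ℝ) i = 1 - 2*δ := fun i => by
      simp [hc]
    calc (∏ i : Fin d, ENNReal.ofReal ((c (1 - 2*δ)) i - (0 : Fin d → ℝ) i))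
        = ∏ _i : Fin d, ENNReal.ofReal (1 - 2*δ) := by
          exact Finset.prod_congr rfl fun i _ => by rw [h1 i]
      _ = (ENNReal.ofReal (1 - 2*δ))^d := by
          rw [Finset.prod_const, Finset.card_univ, Fintype.card_fin]
      _ = ENNReal.ofReal ((1 - 2*δ)^d) := by
          rw [ENNReal.ofReal_pow (by linarith)]
  have hbern : 1 - 2*(d:ℝ)*δ ≤ (1 - 2*δ)^d := by
    have h := one_add_mul_le_pow (show (-2:ℝ) ≤ -(2*δ) by linarith) d
    have e : (1 + -(2*δ)) = 1 - 2*δ := by ring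
    rw [e] at h
    linarith
  have hfinal : volume G ≤ ENNReal.ofReal (2 * d * δ) := by
    have h2 : (1:ℝ≥0∞) ≤ ENNReal.ofReal (2*d*δ) + volume Q := by
      rw [hQvol, ← ENNReal.ofReal_add (by positivity) (pow_nonneg (by linarith) d)]
      refine ENNReal.one_le_ofReal.mpr ?_
      linarith
    have h3 : volume G + volume Q ≤ ENNReal.ofReal (2*d*δ) + volume Q :=
      le_trans hmain h2
    have hQfin : volume Q ≠ ⊤ := by rw [hQvol]; exact ENNReal.ofReal_ne_top
    exact (ENNReal.add_le_add_iff_right hQfin).mp h3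
  exact le_trans (measure_mono hWG) hfinal
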